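/- Let A, B ∈ SL₃(ℤ) with A ≠ B be adjacent vertices of the 334-triangle graph (so A³ = B³ = I, neither equals I, and (AB)⁴ = I). Then for any prime p, their reductions A', B' mod p satisfy A'³ = I, B'³ = I, (A'B')⁴ = I, and A' ≠ B'. -/

import Mathlib

private lemma cube_expand (M : Matrix (Fin 3) (Fin 3) ℤ) (c : ℤ) :
    (1 + c • M) ^ 3 = 1 + (3*c) • M + (3*c^2) • (M*M) + (c^3) • (M*(M*M)) := by
  simp only [pow_succ, pow_zero, one_mul, mul_add, add_mul, one_mul, mul_one,
    smul_mul_assoc, mul_smul_comm, smul_smul, mul_assoc]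
  module

private lemma eq_zero_of_mul (M C : Matrix (Fin 3) (Fin 3) ℤ) (h : M * C = 0)
    (hd : C.det ≠ 0) : M = 0 := by
  have hC : IsUnit ((C.map (Int.castRingHom ℚ)).det) := by
    rw [← RingHom.mapMatrix_apply, ← RingHom.map_det]
    simpa using hd
  have h2 : (M.map (Int.castRingHom ℚ)) * (C.map (Int.castRingHom ℚ)) = 0 := by
    rw [← Matrix.map_mul, h]; simp
  have h3 : (M.map (Int.castRingHom ℚ)) = 0 := by
    calc M.map (Int.castRingHom ℚ)
        = (M.map (Int.castRingHom ℚ)) * ((C.map (Int.castRingHom ℚ)) * (C.map (Int.castRingHom ℚ))⁻¹) := by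
          rw [Matrix.mul_nonsing_inv _ hC, mul_one]
      _ = 0 := by rw [← Matrix.mul_assoc, h2, Matrix.zero_mul]
  ext i j
  have := congrFun (congrFun h3 i) j
  simpa using this

private lemma smul_cancel (c : ℤ) (N : Matrix (Fin 3) (Fin 3) ℤ) (hc : c ≠ 0)
    (h : c • N = 0) : N = 0 := by
  ext i j
  have := congrFun (congrFun h i) j
  simp only [Matrix.smul_apply, smul_eq_mul, Matrix.zero_apply, mul_eq_zero] at this
  tauto

private lemma det_cast_ne (p : ℕ) [Fact p.Prime] (hp3 : p ≠ 3) (M : Matrix (Fin 3) (Fin 3) ℤ) :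
    ((((3:ℤ) • (1 : Matrix (Fin 3) (Fin 3) ℤ) + (3*(p:ℤ)) • M + ((p:ℤ)^2) • (M*M)).det : ℤ) : ZMod p) ≠ 0 := by
  set C := (3:ℤ) • (1 : Matrix (Fin 3) (Fin 3) ℤ) + (3*(p:ℤ)) • M + ((p:ℤ)^2) • (M*M) with hC
  have hmapC : C.map (Int.castRingHom (ZMod p)) = (3 : ZMod p) • 1 := by
    ext i j
    simp only [hC, Matrix.map_apply, Matrix.add_apply, Matrix.smul_apply, smul_eq_mul,
      Int.coe_castRingHom]
    by_cases hij : i = j <;>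
      · simp only [Matrix.one_apply, hij, if_true, if_false, reduceIte]
        push_cast [ZMod.natCast_self]
        ring
  rw [show ((C.det : ℤ) : ZMod p) = (Int.castRingHom (ZMod p)) C.det from rfl,
    RingHom.map_det, RingHom.mapMatrix_apply, hmapC]
  rw [Matrix.det_smul, Matrix.det_one]
  intro h
  have h27 : ((27 : ℕ) : ZMod p) = 0 := by
    norm_num at h ⊢
    convert h using 2
  rw [ZMod.natCast_eq_zero_iff] at h27
  have h3 := Nat.Prime.dvd_of_dvd_pow (Fact.out) (show p ∣ 3 ^ 3 by norm_num; exact h27)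
  exact hp3 ((Nat.prime_dvd_prime_iff_eq Fact.out (by norm_num)).mp h3)

private lemma det_cast_ne3 (M : Matrix (Fin 3) (Fin 3) ℤ) :
    ((((1 : Matrix (Fin 3) (Fin 3) ℤ) + (3:ℤ) • M + (3:ℤ) • (M*M)).det : ℤ) : ZMod 3) ≠ 0 := by
  set C := (1 : Matrix (Fin 3) (Fin 3) ℤ) + (3:ℤ) • M + (3:ℤ) • (M*M) with hC
  have hmapC : C.map (Int.castRingHom (ZMod 3)) = 1 := by
    ext i j
    simp only [hC, Matrix.map_apply, Matrix.add_apply, Matrix.smul_apply, smul_eq_mul,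
      Int.coe_castRingHom]
    by_cases hij : i = j <;>
      · simp only [Matrix.one_apply, hij, if_true, if_false, reduceIte]
        push_cast
        rw [show (3:ZMod 3) = 0 from rfl]
        ring
  rw [show ((C.det : ℤ) : ZMod 3) = (Int.castRingHom (ZMod 3)) C.det from rfl,
    RingHom.map_det, RingHom.mapMatrix_apply, hmapC, Matrix.det_one]
  decide

private lemma key (p : ℕ) (hp : p.Prime) (A : Matrix.SpecialLinearGroup (Fin 3) ℤ)
    (hA : A ^ 3 = 1)
    (h1 : Matrix.SpecialLinearGroup.map (n := Fin 3) (Int.castRingHom (ZMod p)) A = 1) :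
    A = 1 := by
  haveI : Fact p.Prime := ⟨hp⟩
  set a : Matrix (Fin 3) (Fin 3) ℤ := (A : Matrix (Fin 3) (Fin 3) ℤ) with ha
  have hmap : a.map (Int.castRingHom (ZMod p)) = 1 := by
    have := congrArg (Subtype.val) h1
    exact this
  have hdvd : ∀ i j, (p : ℤ) ∣ (a - 1) i j := by
    intro i j
    rw [← ZMod.intCast_zmod_eq_zero_iff_dvd]
    have := congrFun (congrFun hmap i) j
    simp only [Matrix.map_apply, Int.coe_castRingHom, Matrix.one_apply] at this
    by_cases hij : i = j <;>
      simp [Matrix.sub_apply, Matrix.one_apply, hij, this] at this ⊢ <;> simp [this]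
  set M : Matrix (Fin 3) (Fin 3) ℤ := Matrix.of (fun i j => (a - 1) i j / p) with hMdef
  have haM : a = 1 + (p : ℤ) • M := by
    ext i j
    have h5 := Int.ediv_mul_cancel (hdvd i j)
    simp only [Matrix.add_apply, Matrix.smul_apply, hMdef, Matrix.of_apply, smul_eq_mul]
    rw [mul_comm ((p:ℤ)), h5, Matrix.sub_apply]
    ring
  have ha3 : a ^ 3 = 1 := by
    have := congrArg (Subtype.val) hA
    simpa using this
  rw [haM, cube_expand] at ha3
  have hz : (3 * (p:ℤ)) • M + (3 * (p:ℤ)^2) • (M*M) + ((p:ℤ)^3) • (M*(M*M)) = 0 := by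
    have := ha3
    abel_nf at this ⊢
    linear_combination (norm := abel_nf) this
  have hM0 : M = 0 := by
    by_cases hp3 : p = 3
    · subst hp3
      set C := (1 : Matrix (Fin 3) (Fin 3) ℤ) + (3:ℤ) • M + (3:ℤ) • (M*M) with hC
      push_cast at hz
      have hfac : (9:ℤ) • (M * C) =
          (9:ℤ) • M + (27:ℤ) • (M*M) + (27:ℤ) • (M*(M*M)) := by
        simp only [hC, mul_add, mul_one, mul_smul_comm, smul_smul, mul_assoc]
        module
      rw [hz] at hfac
      have hMC : M * C = 0 := smul_cancel 9 _ (by norm_num) hfac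
      have hdet : C.det ≠ 0 := fun h0 => det_cast_ne3 M (by rw [h0]; simp)
      exact eq_zero_of_mul M C hMC hdet
    · set C := (3:ℤ) • (1 : Matrix (Fin 3) (Fin 3) ℤ) + (3*(p:ℤ)) • M + ((p:ℤ)^2) • (M*M) with hC
      have hfac : (p:ℤ) • (M * C) =
          (3 * (p:ℤ)) • M + (3 * (p:ℤ)^2) • (M*M) + ((p:ℤ)^3) • (M*(M*M)) := by
        simp only [hC, mul_add, mul_one, mul_smul_comm, smul_smul, mul_assoc]
        module
      rw [hz] at hfac
      have hMC : M * C = 0 := smul_cancel p _ (by exact_mod_cast hp.ne_zero) hfac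
      have hdet : C.det ≠ 0 := fun h0 => det_cast_ne p hp3 M (by rw [← hC, h0]; simp)
      exact eq_zero_of_mul M C hMC hdet
  apply Subtype.ext
  show a = _
  rw [haM, hM0]
  simp

theorem stmt_16 (A B : Matrix.SpecialLinearGroup (Fin 3) ℤ)
    (hA : A ^ 3 = 1) (hB : B ^ 3 = 1) (hA1 : A ≠ 1) (hB1 : B ≠ 1)
    (hAB : A ≠ B) (hadj : (A * B) ^ 4 = 1) (p : ℕ) (hp : p.Prime) :
    let f := Matrix.SpecialLinearGroup.map (n := Fin 3) (Int.castRingHom (ZMod p))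
    f A ^ 3 = 1 ∧ f B ^ 3 = 1 ∧ (f A * f B) ^ 4 = 1 ∧ f A ≠ f B := by
  intro f
  have hfA : f A ^ 3 = 1 := by rw [← map_pow, hA, map_one]
  have hfB : f B ^ 3 = 1 := by rw [← map_pow, hB, map_one]
  have hfAB : (f A * f B) ^ 4 = 1 := by rw [← map_mul, ← map_pow, hadj, map_one]
  refine ⟨hfA, hfB, hfAB, ?_⟩
  intro heq
  have h8 : f A ^ 8 = 1 := by
    have : (f A * f A) ^ 4 = 1 := by rw [heq] at hfAB ⊢; exact hfAB
    calc f A ^ 8 = (f A * f A) ^ 4 := by rw [← sq, ← pow_mul]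
      _ = 1 := this
  have h2 : f A ^ 2 = 1 := by
    calc f A ^ 2 = f A ^ 8 * (f A ^ 3)⁻¹ * (f A ^ 3)⁻¹ := by group
      _ = 1 := by rw [h8, hfA]; group
  have h1 : f A = 1 := by
    calc f A = f A ^ 3 * (f A ^ 2)⁻¹ := by group
      _ = 1 := by rw [h2, hfA]; group
  exact hA1 (key p hp A hA h1)
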